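/- For every μ ∈ (-0.5, 0.5), the matrix A(μ) is Hurwitz, i.e., every eigenvalue of A(μ) has strictly negative real part. -/

import Mathlib

open Matrix

set_option maxHeartbeats 2000000 in
/-- for every μ ∈ (-0.5, 0.5), A(μ) is Hurwitz. -/
theorem A_mu_Hurwitz
    (L1 L2 C1 C2 R : ℝ) (hL1 : 0 < L1) (hL2 : 0 < L2) (hC1 : 0 < C1)
    (hC2 : 0 < C2) (hR : 0 < R)
    (P : Matrix (Fin 4) (Fin 4) ℝ) (hP : P = (1/2 : ℝ) • Matrix.diagonal ![L1, L2, C1, C2])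
    (A0q E0q : Matrix (Fin 4) (Fin 4) ℝ)
    (hA0q : A0q = !![0,0,-1/2,0; 0,0,1/2,1; 1/2,-1/2,0,0; 0,-1,0,-1/R])
    (hE0q : E0q = !![0,0,1,0; 0,0,1,0; -1,-1,0,0; 0,0,0,0])
    (A : ℝ → Matrix (Fin 4) (Fin 4) ℝ)
    (hA : ∀ μ, A μ = (1/2 : ℝ) • (P⁻¹ * (A0q + μ • E0q))) :
    ∀ μ ∈ Set.Ioo (-(0.5:ℝ)) 0.5,
      ∀ z ∈ spectrum ℂ ((A μ).map (Complex.ofReal)), z.re < 0 := by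
  intro μ hμ z hz
  obtain ⟨hμ1, hμ2⟩ := hμ
  have hμ1' : -(1/2 : ℝ) < μ := by norm_num at hμ1 ⊢; linarith
  have hμ2' : μ < 1/2 := by norm_num at hμ2 ⊢; linarith
  -- explicit formula for A μ
  have hAex : A μ = !![0,0,(μ-1/2)/L1,0; 0,0,(μ+1/2)/L2,1/L2;
        (1/2-μ)/C1,(-1/2-μ)/C1,0,0; 0,-1/C2,0,-1/(R*C2)] := by
    rw [hA, hP, hA0q, hE0q]
    have hdg : ((1/2 : ℝ) • Matrix.diagonal ![L1, L2, C1, C2])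
        = Matrix.diagonal ![L1/2, L2/2, C1/2, C2/2] := by
      rw [← Matrix.diagonal_smul]
      congr 1
      funext i
      fin_cases i <;> simp <;> ring
    have hPinv : (Matrix.diagonal ![L1/2, L2/2, C1/2, C2/2])⁻¹
        = Matrix.diagonal ![2/L1, 2/L2, 2/C1, 2/C2] := by
      apply Matrix.inv_eq_right_inv
      rw [Matrix.diagonal_mul_diagonal]
      ext i j
      fin_cases i <;> fin_cases j <;>
        simp [Matrix.diagonal, Matrix.one_apply] <;> field_simp
    have hM : (!![0,0,-1/2,0; 0,0,1/2,1; 1/2,-1/2,0,0; 0,-1,0,-1/R]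
        + μ • !![0,0,1,0; 0,0,1,0; -1,-1,0,0; 0,0,0,0])
        = !![0,0,μ-1/2,0; 0,0,μ+1/2,1; 1/2-μ,-1/2-μ,0,0; 0,-1,0,-1/R] := by
      ext i j
      fin_cases i <;> fin_cases j <;>
        simp [Matrix.vecHead, Matrix.vecTail] <;> (try ring) <;> tauto
    rw [hdg, hPinv, hM]
    ext i j
    rw [Matrix.smul_apply, Matrix.diagonal_mul]
    fin_cases i <;> fin_cases j <;>
      (simp [Matrix.vecHead, Matrix.vecTail]; try field_simp) <;> (try ring) <;> tauto
  -- extract an eigenvector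
  set B := (A μ).map (Complex.ofReal) with hB
  rw [spectrum.mem_iff] at hz
  have hdet : (algebraMap ℂ (Matrix (Fin 4) (Fin 4) ℂ) z - B).det = 0 := by
    by_contra h
    exact hz ((Matrix.isUnit_iff_isUnit_det _).mpr (isUnit_iff_ne_zero.mpr h))
  obtain ⟨v, hv0, hv⟩ := (Matrix.exists_mulVec_eq_zero_iff).mpr hdet
  rw [Matrix.sub_mulVec] at hv
  have h2 : (algebraMap ℂ (Matrix (Fin 4) (Fin 4) ℂ) z).mulVec v = z • v := by
    funext i
    simp [Matrix.algebraMap_eq_diagonal, Matrix.mulVec_diagonal]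
  rw [h2] at hv
  have heig : B.mulVec v = z • v := (sub_eq_zero.mp hv).symm
  -- componentwise equations
  have hL1' : (L1:ℂ) ≠ 0 := by exact_mod_cast hL1.ne'
  have hL2' : (L2:ℂ) ≠ 0 := by exact_mod_cast hL2.ne'
  have hC1' : (C1:ℂ) ≠ 0 := by exact_mod_cast hC1.ne'
  have hC2' : (C2:ℂ) ≠ 0 := by exact_mod_cast hC2.ne'
  have hR' : (R:ℂ) ≠ 0 := by exact_mod_cast hR.ne'
  have h0 := congrFun heig 0
  have h1 := congrFun heig 1
  have h2' := congrFun heig 2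
  have h3 := congrFun heig 3
  rw [hB, hAex] at h0 h1 h2' h3
  simp [Matrix.mulVec, dotProduct, Fin.sum_univ_four, Matrix.map_apply] at h0 h1 h2' h3
  -- cleared complex equations
  have E0 : ((2*μ-1 : ℝ):ℂ) * v 2 = z * v 0 * (2*L1) := by
    push_cast at h0 ⊢
    field_simp at h0
    linear_combination h0
  have E1 : ((2*μ+1 : ℝ):ℂ) * v 2 + 2 * v 3 = z * v 1 * (2*L2) := by
    push_cast at h1 ⊢
    field_simp at h1
    apply mul_left_cancel₀ hL2'
    linear_combination (L2:ℂ) * h1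
  have E2 : ((1-2*μ : ℝ):ℂ) * v 0 + ((-1-2*μ : ℝ):ℂ) * v 1 = z * v 2 * (2*C1) := by
    push_cast at h2' ⊢
    field_simp at h2'
    linear_combination h2'
  have E3 : -(v 1 * (R:ℂ)) - v 3 = z * v 3 * ((R:ℂ) * C2) := by
    push_cast at h3 ⊢
    field_simp at h3
    apply mul_left_cancel₀ hC2'
    linear_combination (C2:ℂ) * h3
  -- split into real and imaginary parts
  rw [Complex.ext_iff] at E0 E1 E2 E3
  obtain ⟨E0r, E0i⟩ := E0
  obtain ⟨E1r, E1i⟩ := E1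
  obtain ⟨E2r, E2i⟩ := E2
  obtain ⟨E3r, E3i⟩ := E3
  simp [Complex.mul_re, Complex.mul_im, Complex.add_re, Complex.add_im] at E0r E0i E1r E1i E2r E2i E3r E3i
  -- energy identity
  have hkey : 2*z.re*R*(L1*((v 0).re^2+(v 0).im^2) + L2*((v 1).re^2+(v 1).im^2)
        + C1*((v 2).re^2+(v 2).im^2) + C2*((v 3).re^2+(v 3).im^2))
      = -2*((v 3).re^2+(v 3).im^2) := by
    linear_combination -(R*(v 0).re)*E0r - R*(v 0).im*E0i - R*(v 1).re*E1r - R*(v 1).im*E1i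
      - R*(v 2).re*E2r - R*(v 2).im*E2i - 2*(v 3).re*E3r - 2*(v 3).im*E3i
  by_contra hcon
  push_neg at hcon
  have hS : 0 ≤ L1*((v 0).re^2+(v 0).im^2) + L2*((v 1).re^2+(v 1).im^2)
      + C1*((v 2).re^2+(v 2).im^2) + C2*((v 3).re^2+(v 3).im^2) := by positivity
  have h33 : (v 3).re^2 + (v 3).im^2 = 0 := by
    nlinarith [sq_nonneg (v 3).re, sq_nonneg (v 3).im,
      mul_nonneg (mul_nonneg (mul_nonneg (by norm_num : (0:ℝ) ≤ 2) hcon) hR.le) hS]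
  have hx3 : (v 3).re = 0 := by
    have h' : (v 3).re^2 = 0 := by nlinarith [sq_nonneg (v 3).im]
    exact sq_eq_zero_iff.mp h'
  have hy3 : (v 3).im = 0 := by
    have h' : (v 3).im^2 = 0 := by nlinarith [sq_nonneg (v 3).re]
    exact sq_eq_zero_iff.mp h'
  have hx1 : (v 1).re = 0 := by
    rw [hx3, hy3] at E3r
    have h' : (v 1).re * R = 0 := by linarith
    exact (mul_eq_zero.mp h').resolve_right hR.ne'
  have hy1 : (v 1).im = 0 := by
    rw [hx3, hy3] at E3i
    have h' : (v 1).im * R = 0 := by linarith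
    exact (mul_eq_zero.mp h').resolve_right hR.ne'
  have h2μ : (2*μ+1) ≠ 0 := by linarith
  have hx2 : (v 2).re = 0 := by
    rw [hx3, hx1, hy1] at E1r
    have h' : (2*μ+1) * (v 2).re = 0 := by linarith
    exact (mul_eq_zero.mp h').resolve_left h2μ
  have hy2 : (v 2).im = 0 := by
    rw [hy3, hx1, hy1] at E1i
    have h' : (2*μ+1) * (v 2).im = 0 := by linarith
    exact (mul_eq_zero.mp h').resolve_left h2μ
  have h1μ : (1-2*μ) ≠ 0 := by linarith
  have hx0 : (v 0).re = 0 := by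
    rw [hx2, hy2, hx1] at E2r
    have h' : (1-2*μ) * (v 0).re = 0 := by linarith
    exact (mul_eq_zero.mp h').resolve_left h1μ
  have hy0 : (v 0).im = 0 := by
    rw [hx2, hy2, hy1] at E2i
    have h' : (1-2*μ) * (v 0).im = 0 := by linarith
    exact (mul_eq_zero.mp h').resolve_left h1μ
  apply hv0
  funext i
  fin_cases i <;> apply Complex.ext <;>
    simp only [Pi.zero_apply, Complex.zero_re, Complex.zero_im] <;>
    assumption
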